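/- arXiv:1204.4908 — 2 statements merged into one kernel-verified Lean document; each statement's English description precedes it below -/
import Mathlib

section
/- (1) Every nonzero ideal I of the Lie algebra u_∞ contains the ideal u_{∞,m} = ⊕_{j≥m} P_{j-1}∂_j for some integer m ≥ 1. (2) The set of Lie ideals of u_∞ is totally ordered by inclusion, i.e., u_∞ is a uniserial Lie algebra. -/
open MvPolynomial

noncomputable section


theorem Derivation.mem_supported_of_forall_mem'
    {K : Type*} [CommRing K] {σ : Type*} (s : Set σ)
    (D : Derivation K (MvPolynomial σ K) (MvPolynomial σ K))
    (h : ∀ j ∈ s, D (X j) ∈ supported K s)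
    {p : MvPolynomial σ K} (hp : p ∈ supported K s) : D p ∈ supported K s := by
  rw [supported_eq_adjoin_X] at hp
  induction hp using Algebra.adjoin_induction with
  | mem x hx =>
    obtain ⟨j, hj, rfl⟩ := hx
    exact h j hj
  | algebraMap r =>
    rw [Derivation.map_algebraMap]
    exact zero_mem _
  | add x y hx hy ihx ihy =>
    rw [map_add]
    exact add_mem ihx ihy
  | mul x y hx hy ihx ihy =>
    rw [Derivation.leibniz, smul_eq_mul, smul_eq_mul]
    rw [← supported_eq_adjoin_X] at hx hy
    exact add_mem (mul_mem hx ihy) (mul_mem hy ihx)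

/-- The defining condition for the Lie algebra `u_∞ = ⊕_{i ≥ 1} P_{i-1}∂_i` of triangular
polynomial derivations of `P_∞ = K[x₁,x₂,…]` (variables indexed by `ℕ`, zero-based):
a derivation `D` belongs to `u_∞` iff each `D (X i)` only involves the variables `X j`
with `j < i`, and all but finitely many of the `D (X i)` vanish (so that `D` is a *finite*
sum `Σ a_i ∂_i` with `a_i ∈ P_{i-1}`). -/
def triSetInf (K : Type*) [Field K] :
    Set (Derivation K (MvPolynomial ℕ K) (MvPolynomial ℕ K)) :=
  {D | (∀ i : ℕ, D (X i) ∈ supported K {j : ℕ | j < i}) ∧ {i : ℕ | D (X i) ≠ 0}.Finite}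

theorem triSetInf_stable {K : Type*} [Field K]
    {D : Derivation K (MvPolynomial ℕ K) (MvPolynomial ℕ K)}
    (hD : D ∈ triSetInf K) (i : ℕ) :
    ∀ j ∈ {j' : ℕ | j' < i}, D (X j) ∈ supported K {j' : ℕ | j' < i} := by
  intro j hj
  have hj' : j < i := hj
  refine supported_mono (t := {j' : ℕ | j' < i}) ?_ (hD.1 j)
  intro l hl
  have hl' : l < j := hl
  exact lt_trans hl' hj'

/-- The Lie algebra `u_∞ = ⊕_{i ≥ 1} P_{i-1}∂_i` of triangular polynomial derivations of
the polynomial algebra `P_∞ = K[x₁,x₂,…]` in countably many variables, as a Lie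
subalgebra of the Lie algebra of all `K`-derivations of `P_∞`. -/
def triangularInf (K : Type*) [Field K] :
    LieSubalgebra K (Derivation K (MvPolynomial ℕ K) (MvPolynomial ℕ K)) where
  carrier := triSetInf K
  add_mem' := by
    intro a b ha hb
    constructor
    · intro i
      rw [Derivation.add_apply]
      exact add_mem (ha.1 i) (hb.1 i)
    · refine Set.Finite.subset (ha.2.union hb.2) ?_
      intro i hi
      by_contra hcon
      simp only [Set.mem_union, Set.mem_setOf_eq, not_or, not_not] at hcon
      exact hi (by rw [Derivation.add_apply, hcon.1, hcon.2, add_zero])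
  zero_mem' := by
    constructor
    · intro i
      rw [Derivation.zero_apply]
      exact zero_mem _
    · refine Set.Finite.subset (Set.finite_empty) ?_
      intro i hi
      exact hi (Derivation.zero_apply _)
  smul_mem' := by
    intro c a ha
    constructor
    · intro i
      rw [Derivation.smul_apply]
      exact Subalgebra.smul_mem _ (ha.1 i) c
    · refine Set.Finite.subset ha.2 ?_
      intro i hi
      by_contra hcon
      simp only [Set.mem_setOf_eq, not_not] at hcon
      exact hi (by rw [Derivation.smul_apply, hcon, smul_zero])
  lie_mem' := by
    intro a b ha hb
    constructor
    · intro i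
      rw [Derivation.commutator_apply]
      exact sub_mem
        (Derivation.mem_supported_of_forall_mem' _ a (triSetInf_stable ha i) (hb.1 i))
        (Derivation.mem_supported_of_forall_mem' _ b (triSetInf_stable hb i) (ha.1 i))
    · refine Set.Finite.subset (ha.2.union hb.2) ?_
      intro i hi
      by_contra hcon
      simp only [Set.mem_union, Set.mem_setOf_eq, not_or, not_not] at hcon
      refine hi ?_
      rw [Derivation.commutator_apply, hcon.1, hcon.2, map_zero, map_zero, sub_zero]

namespace VB
attribute [local instance 0] Classical.propDecidable
variable {K : Type*} [Field K]

def SS (K : Type*) [Field K] (m : ℕ) : Subalgebra K (MvPolynomial ℕ K) :=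
  supported K {j | j < m}

lemma SS_mono {m m' : ℕ} (h : m ≤ m') : SS K m ≤ SS K m' :=
  supported_mono (fun j (hj : j < m) => lt_of_lt_of_le hj h)

lemma X_mem_SS {j m : ℕ} (h : j < m) : (X j : MvPolynomial ℕ K) ∈ SS K m :=
  X_mem_supported.2 h

lemma pderiv_mem_SS {i m : ℕ} {p : MvPolynomial ℕ K} (hp : p ∈ SS K m) :
    pderiv i p ∈ SS K m := by
  refine Derivation.mem_supported_of_forall_mem' _ _ (fun j hj => ?_) hp
  by_cases h : j = i
  · subst h; rw [pderiv_X_self]; exact one_mem _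
  · rw [pderiv_X_of_ne h]; exact zero_mem _

lemma derivation_zero_on_supported {s : Set ℕ}
    (D : Derivation K (MvPolynomial ℕ K) (MvPolynomial ℕ K))
    (h : ∀ j ∈ s, D (X j) = 0) {p : MvPolynomial ℕ K} (hp : p ∈ supported K s) :
    D p = 0 := by
  have : D p = (0 : Derivation K (MvPolynomial ℕ K) (MvPolynomial ℕ K)) p :=
    derivation_eqOn_supported (fun j hj => by simpa using h j hj) hp
  simpa using this

lemma pderiv_zero_on_SS {t m : ℕ} (h : m ≤ t) {p : MvPolynomial ℕ K} (hp : p ∈ SS K m) :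
    pderiv t p = 0 :=
  derivation_zero_on_supported _
    (fun j hj => pderiv_X_of_ne (Nat.ne_of_lt (lt_of_lt_of_le hj h))) hp

lemma dsum_apply {ι : Type*} (s : Finset ι)
    (f : ι → Derivation K (MvPolynomial ℕ K) (MvPolynomial ℕ K)) (p : MvPolynomial ℕ K) :
    (∑ i ∈ s, f i) p = ∑ i ∈ s, f i p := by
  classical
  induction s using Finset.induction with
  | empty => simp
  | insert _ _ h ih =>
    rw [Finset.sum_insert h, Finset.sum_insert h, Derivation.add_apply, ih]

/-- chain rule: `D p = ∑_{l < m} D (X l) * pderiv l p` for `p ∈ SS m`. -/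
lemma derivation_apply_eq_sum {m : ℕ}
    (D : Derivation K (MvPolynomial ℕ K) (MvPolynomial ℕ K))
    {p : MvPolynomial ℕ K} (hp : p ∈ SS K m) :
    D p = ∑ l ∈ Finset.range m, D (X l) * pderiv l p := by
  classical
  have key : D p = (∑ l ∈ Finset.range m, (D (X l)) • pderiv l) p := by
    refine derivation_eqOn_supported (fun j hj => ?_) hp
    have hj' : j < m := hj
    simp only [Function.comp_apply, dsum_apply, Derivation.smul_apply]
    rw [Finset.sum_eq_single j]
    · rw [pderiv_X_self, smul_eq_mul, mul_one]
    · intro b _ hb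
      rw [pderiv_X_of_ne (Ne.symm hb), smul_zero]
    · intro h; exact absurd (Finset.mem_range.2 hj') h
  rw [key, dsum_apply]
  exact Finset.sum_congr rfl (fun l _ => by rw [Derivation.smul_apply, smul_eq_mul])



variable {K : Type*} [Field K]

/-- the derivation `p ∂_j`. -/
def elemD (j : ℕ) (p : MvPolynomial ℕ K) :
    Derivation K (MvPolynomial ℕ K) (MvPolynomial ℕ K) :=
  p • pderiv j

lemma elemD_apply (j : ℕ) (p q : MvPolynomial ℕ K) :
    elemD j p q = p * pderiv j q := rfl

lemma elemD_X (j : ℕ) (p : MvPolynomial ℕ K) (i : ℕ) :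
    elemD j p (X i) = if i = j then p else 0 := by
  rw [elemD_apply]
  by_cases h : i = j
  · subst h; rw [pderiv_X_self, mul_one, if_pos rfl]
  · rw [pderiv_X_of_ne h, mul_zero, if_neg h]

lemma elemD_X_self (j : ℕ) (p : MvPolynomial ℕ K) : elemD j p (X j) = p := by
  rw [elemD_X, if_pos rfl]

lemma elemD_X_ne (j : ℕ) (p : MvPolynomial ℕ K) {i : ℕ} (h : i ≠ j) :
    elemD j p (X i) = 0 := by rw [elemD_X, if_neg h]

lemma elemD_zero_on {j m : ℕ} (h : m ≤ j) (p : MvPolynomial ℕ K)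
    {q : MvPolynomial ℕ K} (hq : q ∈ SS K m) : elemD j p q = 0 := by
  rw [elemD_apply, pderiv_zero_on_SS h hq, mul_zero]

lemma elemD_mem {j : ℕ} {p : MvPolynomial ℕ K} (hp : p ∈ SS K j) :
    elemD j p ∈ triangularInf K := by
  constructor
  · intro i
    rw [elemD_X]
    by_cases h : i = j
    · rw [if_pos h]; subst h; exact hp
    · rw [if_neg h]; exact zero_mem _
  · refine Set.Finite.subset (Set.finite_singleton j) (fun i hi => ?_)
    simp only [Set.mem_setOf_eq] at hi
    by_contra h
    exact hi (elemD_X_ne j p h)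

lemma pderiv_mem_triangularInf (l : ℕ) :
    (pderiv l : Derivation K (MvPolynomial ℕ K) (MvPolynomial ℕ K)) ∈ triangularInf K := by
  constructor
  · intro i
    by_cases h : i = l
    · subst h; rw [pderiv_X_self]; exact one_mem _
    · rw [pderiv_X_of_ne h]; exact zero_mem _
  · refine Set.Finite.subset (Set.finite_singleton l) (fun i hi => ?_)
    simp only [Set.mem_setOf_eq] at hi
    by_contra h
    exact hi (pderiv_X_of_ne h)

/-- decomposition of a triangular derivation as a finite sum of `elemD`. -/
lemma decomp (a : Derivation K (MvPolynomial ℕ K) (MvPolynomial ℕ K))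
    (F : Finset ℕ) (hF : ∀ i, a (X i) ≠ 0 → i ∈ F) :
    a = ∑ j ∈ F, elemD j (a (X j)) := by
  classical
  refine derivation_ext (fun i => ?_)
  rw [dsum_apply]
  rw [Finset.sum_congr rfl (fun j _ => elemD_X j (a (X j)) i)]
  rw [Finset.sum_ite_eq F i (fun j => a (X j))]
  by_cases h : i ∈ F
  · rw [if_pos h]
  · rw [if_neg h]
    by_contra hne
    exact h (hF i (fun hz => hne hz))

lemma commutator_X (D E : Derivation K (MvPolynomial ℕ K) (MvPolynomial ℕ K)) (i : ℕ) :
    ⁅D, E⁆ (X i) = D (E (X i)) - E (D (X i)) := by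
  rw [Derivation.commutator_apply]

lemma pderiv_bracket_X (D : Derivation K (MvPolynomial ℕ K) (MvPolynomial ℕ K)) (l i : ℕ) :
    ⁅(pderiv l : Derivation K (MvPolynomial ℕ K) (MvPolynomial ℕ K)), D⁆ (X i)
      = pderiv l (D (X i)) := by
  rw [commutator_X]
  by_cases h : i = l
  · subst h; rw [pderiv_X_self, Derivation.map_one_eq_zero, sub_zero]
  · rw [pderiv_X_of_ne h, map_zero, sub_zero]

lemma bracket_elemD_X (D : Derivation K (MvPolynomial ℕ K) (MvPolynomial ℕ K))
    (j : ℕ) (h : MvPolynomial ℕ K) (i : ℕ) :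
    ⁅D, elemD j h⁆ (X i) = (if i = j then D h else 0) - h * pderiv j (D (X i)) := by
  rw [commutator_X, elemD_X, elemD_apply]
  by_cases hij : i = j
  · rw [if_pos hij, if_pos hij]
  · rw [if_neg hij, if_neg hij, map_zero]



/-! ### coefficient extraction with respect to one variable -/
variable {K : Type*} [Field K]

/-- view a polynomial as a polynomial in the single variable `X t`. -/
def phi (t : ℕ) : MvPolynomial ℕ K →ₐ[K] Polynomial (MvPolynomial ℕ K) :=
  aeval (fun j => if j = t then Polynomial.X else Polynomial.C (X j))

lemma phi_X_self (t : ℕ) : phi (K := K) t (X t) = Polynomial.X := by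
  rw [phi, aeval_X, if_pos rfl]

lemma phi_X_ne (t : ℕ) {j : ℕ} (h : j ≠ t) :
    phi (K := K) t (X j) = Polynomial.C (X j) := by
  rw [phi, aeval_X, if_neg h]

lemma phi_C (t : ℕ) (a : K) : phi t (C a) = Polynomial.C (C a) := by
  rw [phi, aeval_C]
  rfl

lemma eval_phi (t : ℕ) (f : MvPolynomial ℕ K) :
    Polynomial.eval (X t) (phi t f) = f := by
  induction f using MvPolynomial.induction_on with
  | C a => rw [phi_C, Polynomial.eval_C]
  | add p q hp hq => rw [map_add, Polynomial.eval_add, hp, hq]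
  | mul_X p i hp =>
    rw [map_mul, Polynomial.eval_mul, hp]
    by_cases h : i = t
    · subst h; rw [phi_X_self, Polynomial.eval_X]
    · rw [phi_X_ne t h, Polynomial.eval_C]

lemma phi_injective (t : ℕ) : Function.Injective (phi (K := K) t) := by
  intro a b h
  have := congrArg (Polynomial.eval (X t)) h
  rwa [eval_phi, eval_phi] at this

/-- coefficient of `(X t)^k` in `f`. -/
def cf (t k : ℕ) (f : MvPolynomial ℕ K) : MvPolynomial ℕ K := (phi t f).coeff k

/-- degree of `f` in the variable `X t`. -/
def degX (t : ℕ) (f : MvPolynomial ℕ K) : ℕ := (phi t f).natDegree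

lemma cf_add (t k : ℕ) (f g : MvPolynomial ℕ K) : cf t k (f + g) = cf t k f + cf t k g := by
  rw [cf, cf, cf, map_add, Polynomial.coeff_add]

lemma cf_zero (t k : ℕ) : cf t k (0 : MvPolynomial ℕ K) = 0 := by
  rw [cf, map_zero, Polynomial.coeff_zero]

lemma cf_smul (t k : ℕ) (c : K) (f : MvPolynomial ℕ K) : cf t k (c • f) = c • cf t k f := by
  rw [cf, cf, map_smul, Polynomial.coeff_smul]

lemma phi_eq_C_of_mem {t : ℕ} {p : MvPolynomial ℕ K} (hp : p ∈ SS K t) :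
    phi t p = Polynomial.C p := by
  rw [SS] at hp
  rw [supported_eq_adjoin_X] at hp
  induction hp using Algebra.adjoin_induction with
  | mem x hx =>
    obtain ⟨j, hj, rfl⟩ := hx
    exact phi_X_ne t (Nat.ne_of_lt hj)
  | algebraMap r => rw [AlgHom.commutes]; rfl
  | add x y hx hy ihx ihy => rw [map_add, ihx, ihy, map_add]
  | mul x y hx hy ihx ihy => rw [map_mul, ihx, ihy, map_mul]

lemma cf_mul_left {t : ℕ} (k : ℕ) {p : MvPolynomial ℕ K} (hp : p ∈ SS K t)
    (f : MvPolynomial ℕ K) : cf t k (p * f) = p * cf t k f := by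
  rw [cf, cf, map_mul, phi_eq_C_of_mem hp, Polynomial.coeff_C_mul]

lemma cf_mem_SS {t : ℕ} {f : MvPolynomial ℕ K} (hf : f ∈ SS K (t + 1)) (k : ℕ) :
    cf t k f ∈ SS K t := by
  rw [SS, supported_eq_adjoin_X] at hf
  induction hf using Algebra.adjoin_induction generalizing k with
  | mem x hx =>
    obtain ⟨j, hj, rfl⟩ := hx
    by_cases h : j = t
    · subst h
      rw [cf, phi_X_self, Polynomial.coeff_X]
      by_cases hk : 1 = k
      · rw [if_pos hk]; exact one_mem _
      · rw [if_neg hk]; exact zero_mem _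
    · rw [cf, phi_X_ne t h, Polynomial.coeff_C]
      by_cases hk : k = 0
      · rw [if_pos hk]
        exact X_mem_SS (lt_of_le_of_ne (Nat.lt_succ_iff.1 hj) h)
      · rw [if_neg hk]; exact zero_mem _
  | algebraMap r =>
    have : (algebraMap K (MvPolynomial ℕ K) r) = C r := rfl
    rw [this, cf, phi_C, Polynomial.coeff_C]
    by_cases hk : k = 0
    · rw [if_pos hk]; exact Subalgebra.algebraMap_mem _ r
    · rw [if_neg hk]; exact zero_mem _
  | add x y hx hy ihx ihy =>
    rw [cf_add]; exact add_mem (ihx k) (ihy k)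
  | mul x y hx hy ihx ihy =>
    rw [cf, map_mul, Polynomial.coeff_mul]
    refine sum_mem (fun c hc => ?_)
    exact mul_mem (ihx c.1) (ihy c.2)

lemma phi_pderiv (t : ℕ) (f : MvPolynomial ℕ K) :
    phi t (pderiv t f) = Polynomial.derivative (phi t f) := by
  induction f using MvPolynomial.induction_on with
  | C a => rw [pderiv_C, map_zero, phi_C, Polynomial.derivative_C]
  | add p q hp hq => rw [map_add, map_add, hp, hq, map_add, Polynomial.derivative_add]
  | mul_X p i hp =>
    by_cases h : i = t
    · subst h
      rw [pderiv_mul, pderiv_X_self, mul_one, map_add, map_mul, hp, map_mul, phi_X_self,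
        Polynomial.derivative_mul, Polynomial.derivative_X, mul_one, add_comm]
    · rw [pderiv_mul, pderiv_X_of_ne h, mul_zero, add_zero, map_mul, hp, map_mul, phi_X_ne t h,
        Polynomial.derivative_mul, Polynomial.derivative_C, mul_zero, add_zero]

lemma cf_pderiv (t k : ℕ) (f : MvPolynomial ℕ K) :
    cf t k (pderiv t f) = cf t (k + 1) f * ((k : MvPolynomial ℕ K) + 1) := by
  rw [cf, cf, phi_pderiv, Polynomial.coeff_derivative]

lemma reconstruct {t n : ℕ} {f : MvPolynomial ℕ K} (h : degX t f < n) :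
    f = ∑ k ∈ Finset.range n, cf t k f * X t ^ k := by
  conv_lhs => rw [← eval_phi t f]
  rw [Polynomial.eval_eq_sum_range' h]
  rfl

lemma cf_degX_ne_zero {t : ℕ} {f : MvPolynomial ℕ K} (h : f ≠ 0) :
    cf t (degX t f) f ≠ 0 := by
  have : phi t f ≠ 0 := fun hz => h (by rw [← eval_phi t f, hz, Polynomial.eval_zero])
  exact Polynomial.leadingCoeff_ne_zero.2 this

lemma cf_eq_zero_of_degX_lt {t k : ℕ} {f : MvPolynomial ℕ K} (h : degX t f < k) :
    cf t k f = 0 := Polynomial.coeff_eq_zero_of_natDegree_lt h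

lemma le_degX_of_cf_ne_zero {t k : ℕ} {f : MvPolynomial ℕ K} (h : cf t k f ≠ 0) :
    k ≤ degX t f := Polynomial.le_natDegree_of_ne_zero h

lemma cf_X_pow_mul (t a k : ℕ) (g : MvPolynomial ℕ K) :
    cf t (k + a) (X t ^ a * g) = cf t k g := by
  rw [cf, cf, map_mul, map_pow, phi_X_self, Polynomial.coeff_X_pow_mul]

/-! ### char zero facts, antiderivative, reduction to constants -/
variable {K : Type*} [Field K] [CharZero K]

lemma natCast_ne_zero' (k : ℕ) : ((k : MvPolynomial ℕ K) + 1) ≠ 0 := by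
  have h : ((k : MvPolynomial ℕ K) + 1) = C ((k : K) + 1) := by
    rw [map_add, map_one, map_natCast]
  rw [h, Ne, C_eq_zero]
  exact Nat.cast_add_one_ne_zero k

lemma degX_eq_of {t k : ℕ} {f : MvPolynomial ℕ K} (h1 : cf t k f ≠ 0)
    (h2 : ∀ k', k < k' → cf t k' f = 0) : degX t f = k :=
  le_antisymm (Polynomial.natDegree_le_iff_coeff_eq_zero.2 (fun m hm => h2 m hm))
    (le_degX_of_cf_ne_zero h1)

lemma pderiv_lead {t : ℕ} {f : MvPolynomial ℕ K} (hf : f ≠ 0) (hd : degX t f ≠ 0) :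
    pderiv t f ≠ 0 ∧ degX t (pderiv t f) = degX t f - 1 := by
  set d := degX t f with hdd
  have hk : d - 1 + 1 = d := Nat.succ_pred_eq_of_ne_zero hd
  have hlead : cf t (d - 1) (pderiv t f) ≠ 0 := by
    rw [cf_pderiv, hk]
    exact mul_ne_zero (cf_degX_ne_zero hf) (natCast_ne_zero' (d-1))
  have hzero : ∀ k', d - 1 < k' → cf t k' (pderiv t f) = 0 := by
    intro k' hk'
    rw [cf_pderiv]
    rw [cf_eq_zero_of_degX_lt, zero_mul]
    omega
  refine ⟨fun h0 => hlead (by rw [h0, cf_zero]), degX_eq_of hlead hzero⟩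

/-- antiderivative with respect to the top variable. -/
lemma exists_antideriv {t : ℕ} {f : MvPolynomial ℕ K} (hf : f ∈ SS K (t + 1)) :
    ∃ g ∈ SS K (t + 1), pderiv t g = f := by
  classical
  refine ⟨∑ k ∈ Finset.range (degX t f + 1),
    (((k : K) + 1)⁻¹ • cf t k f) * X t ^ (k + 1), ?_, ?_⟩
  · refine sum_mem (fun k _ => mul_mem ?_ (pow_mem (X_mem_SS (Nat.lt_succ_self t)) _))
    exact Subalgebra.smul_mem _ (SS_mono (Nat.le_succ t) (cf_mem_SS hf k)) _
  · rw [map_sum]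
    have hterm : ∀ k : ℕ, pderiv t (((((k : ℕ) : K)) + 1)⁻¹ • cf t k f * X t ^ (k + 1))
        = cf t k f * X t ^ k := by
      intro k
      rw [pderiv_mul]
      have h1 : pderiv t ((((k : ℕ) : K) + 1)⁻¹ • cf t k f) = 0 := by
        rw [Derivation.map_smul, pderiv_zero_on_SS (le_refl t) (cf_mem_SS hf k), smul_zero]
      rw [h1, zero_mul, zero_add, pderiv_pow, pderiv_X_self, mul_one, Nat.add_sub_cancel]
      have h2 : ((k : MvPolynomial ℕ K) + 1) = C (((k : ℕ) : K) + 1) := by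
        rw [map_add, map_one, map_natCast]
      push_cast
      rw [h2]
      rw [smul_mul_assoc]
      rw [show cf t k f * (C (((k : ℕ) : K) + 1) * X t ^ k)
          = C (((k : ℕ) : K) + 1) * (cf t k f * X t ^ k) by ring]
      rw [C_mul', smul_smul, inv_mul_cancel₀ (Nat.cast_add_one_ne_zero k), one_smul]
    have hsum := Finset.sum_congr (rfl : Finset.range (degX t f + 1) = _)
      (fun k _ => hterm k)
    rw [hsum]
    exact (reconstruct (Nat.lt_succ_self _)).symm

/-- apply a list of partial derivatives. -/
def applyList (ls : List ℕ) (w : MvPolynomial ℕ K) : MvPolynomial ℕ K :=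
  ls.foldr (fun i q => pderiv i q) w

lemma applyList_append (ls : List ℕ) (t : ℕ) (w : MvPolynomial ℕ K) :
    applyList (ls ++ [t]) w = applyList ls (pderiv t w) := by
  rw [applyList, applyList, List.foldr_append]
  rfl

/-- every nonzero polynomial can be reduced to a nonzero constant by iterated
partial derivatives. -/
lemma exists_list_reduce : ∀ m : ℕ, ∀ w : MvPolynomial ℕ K, w ∈ SS K m → w ≠ 0 →
    ∃ ls : List ℕ, ∃ c : K, c ≠ 0 ∧ applyList ls w = C c := by
  intro m
  induction m with
  | zero =>
    intro w hw hne
    rw [SS] at hw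
    have : {j : ℕ | j < 0} = ∅ := by ext j; simp
    rw [this, supported_empty, Algebra.mem_bot] at hw
    obtain ⟨c, rfl⟩ := hw
    refine ⟨[], c, fun hc => hne (by rw [hc]; exact (algebraMap K _).map_zero), rfl⟩
  | succ t ih =>
    intro w
    generalize hdeg : degX t w = d
    induction d using Nat.strong_induction_on generalizing w with
    | _ d ihd =>
      intro hw hne
      by_cases hd0 : d = 0
      · subst hd0
        have hw' : w ∈ SS K t := by
          have := reconstruct (f := w) (t := t) (n := 1) (by rw [hdeg]; exact Nat.lt_succ_self 0)
          rw [Finset.sum_range_one, pow_zero, mul_one] at this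
          rw [this]
          exact cf_mem_SS hw 0
        exact ih w hw' hne
      · have hpd := pderiv_lead (t := t) hne (by rw [hdeg]; exact hd0)
        obtain ⟨ls, c, hc, hls⟩ := ihd (degX t (pderiv t w)) (by rw [hpd.2, hdeg]; omega)
          (pderiv t w) rfl (pderiv_mem_SS hw) hpd.1
        exact ⟨ls ++ [t], c, hc, by rwa [applyList_append]⟩

/-! ### surjectivity of triangular derivations with invertible leading constant -/

lemma surj {m : ℕ} (D : Derivation K (MvPolynomial ℕ K) (MvPolynomial ℕ K))
    (hD1 : ∀ l, D (X l) ∈ SS K l)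
    (hlow : ∀ l, l < m → D (X l) = 0)
    {c : K} (hc : c ≠ 0) (hDm : D (X m) = C c) :
    ∀ j, m < j → ∀ f, f ∈ SS K j → ∃ h, h ∈ SS K j ∧ D h = f := by
  have base : ∀ f, f ∈ SS K (m+1) → ∃ h, h ∈ SS K (m+1) ∧ D h = f := by
    intro f hf
    obtain ⟨g, hg, hgd⟩ := exists_antideriv (f := c⁻¹ • f)
      (Subalgebra.smul_mem _ hf _)
    refine ⟨g, hg, ?_⟩
    have hsum := derivation_apply_eq_sum D hg
    rw [Finset.sum_eq_single m (fun l hl hne => by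
        rw [hlow l (lt_of_le_of_ne (Nat.lt_succ_iff.1 (Finset.mem_range.1 hl)) hne),
          zero_mul])
      (fun hm => absurd (Finset.mem_range.2 (Nat.lt_succ_self m)) hm)] at hsum
    rw [hsum, hgd, hDm, C_mul', smul_smul, mul_inv_cancel₀ hc, one_smul]
  have step : ∀ j, m + 1 ≤ j → (∀ f, f ∈ SS K j → ∃ h, h ∈ SS K j ∧ D h = f) →
      ∀ f, f ∈ SS K (j+1) → ∃ h, h ∈ SS K (j+1) ∧ D h = f := by
    intro j hj ih f hf
    classical
    set β := D (X j) with hβdef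
    have hβ : β ∈ SS K j := hD1 j
    set Dg := degX j f with hDgdef
    have memg : ∀ (i : ℕ) (prev : MvPolynomial ℕ K), prev ∈ SS K j →
        cf j (Dg - i) f - ((Dg - i + 1 : ℕ) : MvPolynomial ℕ K) * (β * prev) ∈ SS K j :=
      fun i prev hprev => sub_mem (cf_mem_SS hf _)
        (mul_mem (Subalgebra.natCast_mem _ _) (mul_mem hβ hprev))
    let q : ℕ → {x : MvPolynomial ℕ K // x ∈ SS K j} := fun n => Nat.rec
      ⟨0, zero_mem _⟩
      (fun i prev => ⟨Classical.choose (ih _ (memg i prev.1 prev.2)),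
        (Classical.choose_spec (ih _ (memg i prev.1 prev.2))).1⟩) n
    have hq0 : (q 0).1 = 0 := rfl
    have hqD : ∀ i, D ((q (i+1)).1) =
        cf j (Dg - i) f - ((Dg - i + 1 : ℕ) : MvPolynomial ℕ K) * (β * (q i).1) :=
      fun i => (Classical.choose_spec (ih _ (memg i (q i).1 (q i).2))).2
    set A : ℕ → MvPolynomial ℕ K := fun k => (q (Dg + 1 - k)).1 with hAdef
    have hAmem : ∀ k, A k ∈ SS K j := fun k => (q _).2
    have hA0 : A (Dg + 1) = 0 := by
      have : Dg + 1 - (Dg + 1) = 0 := Nat.sub_self _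
      rw [hAdef]; dsimp only; rw [this, hq0]
    have hAD : ∀ k, k ≤ Dg → D (A k) =
        cf j k f - ((k + 1 : ℕ) : MvPolynomial ℕ K) * (β * A (k+1)) := by
      intro k hkle
      have h1 : Dg + 1 - k = (Dg - k) + 1 := by omega
      have h2 : Dg - (Dg - k) = k := by omega
      have h3 : Dg + 1 - (k+1) = Dg - k := by omega
      rw [hAdef]; dsimp only
      rw [h1, h3, hqD (Dg - k), h2]
    refine ⟨∑ k ∈ Finset.range (Dg + 1), A k * X j ^ k, ?_, ?_⟩
    · exact sum_mem (fun k _ => mul_mem (SS_mono (Nat.le_succ j) (hAmem k))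
        (pow_mem (X_mem_SS (Nat.lt_succ_self j)) _))
    · rw [map_sum]
      set G : ℕ → MvPolynomial ℕ K :=
        fun k => ((k : ℕ) : MvPolynomial ℕ K) * (X j ^ (k-1) * (β * A k)) with hGdef
      have hterm : ∀ k, k ∈ Finset.range (Dg + 1) →
          D (A k * X j ^ k) = (G k - G (k+1)) + cf j k f * X j ^ k := by
        intro k hk
        have hkle : k ≤ Dg := Nat.lt_succ_iff.1 (Finset.mem_range.1 hk)
        rw [Derivation.leibniz, Derivation.leibniz_pow, smul_eq_mul, smul_eq_mul,
          smul_eq_mul, ← hβdef, hAD k hkle]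
        rw [hGdef]; dsimp only
        rw [Nat.add_sub_cancel]
        push_cast
        ring
      rw [Finset.sum_congr (rfl : Finset.range (Dg + 1) = _) hterm]
      rw [Finset.sum_add_distrib, Finset.sum_range_sub' G]
      have hG0 : G 0 = 0 := by rw [hGdef]; dsimp only; rw [Nat.cast_zero, zero_mul]
      have hGtop : G (Dg + 1) = 0 := by
        rw [hGdef]; dsimp only; rw [hA0, mul_zero, mul_zero, mul_zero]
      rw [hG0, hGtop, sub_zero, zero_add]
      exact (reconstruct (Nat.lt_succ_self _)).symm
  exact fun j hj => Nat.le_induction base (fun j hj ih => step j hj ih) j hj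

/-! ### ideal-level machinery -/

/-- `∂_l` as an element of the triangular Lie algebra. -/
def Pd (l : ℕ) : ↥(triangularInf K) := ⟨pderiv l, pderiv_mem_triangularInf l⟩

/-- `p ∂_j` as an element of the triangular Lie algebra. -/
def ED {j : ℕ} {p : MvPolynomial ℕ K} (hp : p ∈ SS K j) : ↥(triangularInf K) :=
  ⟨elemD j p, elemD_mem hp⟩

lemma applyList_zero (ls : List ℕ) : applyList ls (0 : MvPolynomial ℕ K) = 0 := by
  induction ls with
  | nil => rfl
  | cons l ls ih =>
    show pderiv l (applyList ls 0) = 0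
    rw [ih, map_zero]

lemma red_list {I : LieIdeal K ↥(triangularInf K)} {a : ↥(triangularInf K)} (ha : a ∈ I)
    (ls : List ℕ) : ∃ b ∈ I, ∀ i, b.val (X i) = applyList ls (a.val (X i)) := by
  induction ls with
  | nil => exact ⟨a, ha, fun i => rfl⟩
  | cons l ls ih =>
    obtain ⟨b, hb, hbv⟩ := ih
    refine ⟨⁅Pd l, b⁆, I.lie_mem hb, fun i => ?_⟩
    show (⁅(pderiv l : Derivation K (MvPolynomial ℕ K) (MvPolynomial ℕ K)), b.val⁆) (X i) = _
    rw [pderiv_bracket_X, hbv i]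
    rfl

/-- Step 1 : from a nonzero minimal component, reach a nonzero constant component. -/
lemma exists_const {I : LieIdeal K ↥(triangularInf K)} {a : ↥(triangularInf K)}
    (ha : a ∈ I) {m : ℕ} (hz : ∀ l, l < m → a.val (X l) = 0) (hm : a.val (X m) ≠ 0) :
    ∃ b ∈ I, (∀ l, l < m → b.val (X l) = 0) ∧ ∃ c : K, c ≠ 0 ∧ b.val (X m) = C c := by
  obtain ⟨ls, c, hc, hred⟩ := exists_list_reduce m (a.val (X m)) (a.2.1 m) hm
  obtain ⟨b, hb, hbv⟩ := red_list ha ls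
  exact ⟨b, hb, fun l hl => by rw [hbv l, hz l hl, applyList_zero],
    c, hc, by rw [hbv m, hred]⟩

/-- the key bracket: `⁅a, h ∂_j⁆` has `j`-th component `a h` and vanishing components
below `j`. -/
lemma bracket_elem_key {a : ↥(triangularInf K)} {j : ℕ} {h : MvPolynomial ℕ K}
    (hh : h ∈ SS K j) :
    ((⁅a, ED hh⁆ : ↥(triangularInf K)).val (X j) = a.val h) ∧
      (∀ i, i ≠ j → (⁅a, ED hh⁆ : ↥(triangularInf K)).val (X i)
        = -(h * pderiv j (a.val (X i)))) := by
  constructor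
  · show (⁅a.val, elemD j h⁆) (X j) = a.val h
    rw [bracket_elemD_X, if_pos rfl, pderiv_zero_on_SS (le_refl j) (a.2.1 j), mul_zero, sub_zero]
  · intro i hij
    show (⁅a.val, elemD j h⁆) (X i) = _
    rw [bracket_elemD_X, if_neg hij, zero_sub]

/-- main lemma (statement (1)): if `I` contains an element with nonzero constant
`m`-th component and zero components below `m`, then `I` contains every element all of
whose components at indices `≤ m` vanish. -/
lemma N_subset {I : LieIdeal K ↥(triangularInf K)} {a : ↥(triangularInf K)}
    (ha : a ∈ I) {m : ℕ} (hz : ∀ l, l < m → a.val (X l) = 0)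
    {c : K} (hc : c ≠ 0) (hC : a.val (X m) = C c) :
    ∀ x : ↥(triangularInf K), (∀ l, l ≤ m → x.val (X l) = 0) → x ∈ I := by
  classical
  -- a bound for the support of `a`
  obtain ⟨n, hn⟩ : ∃ n, ∀ i, a.val (X i) ≠ 0 → i ≤ n := by
    obtain ⟨n, hn⟩ := (Set.Finite.bddAbove a.2.2)
    exact ⟨n, fun i hi => hn hi⟩
  have hmn : m ≤ n := hn m (by rw [hC]; exact fun h0 => hc (by
    have := C_injective ℕ K (by rw [h0, map_zero] : C c = C 0); exact this))
  have hsurj := surj a.val a.2.1 hz hc hC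
  -- brackets with elementary derivations
  have key : ∀ j, m < j → ∀ w, (hw : w ∈ SS K j) →
      ∃ e ∈ I, e.val (X j) = w ∧ (∀ i, i < j → e.val (X i) = 0) ∧
        (∀ i, n < i → i ≠ j → e.val (X i) = 0) := by
    intro j hj w hw
    obtain ⟨h, hh, hah⟩ := hsurj j hj w hw
    refine ⟨⁅a, ED hh⁆, ?_, ?_, ?_, ?_⟩
    · have : (⁅a, ED hh⁆ : ↥(triangularInf K)) = -⁅ED hh, a⁆ := (lie_skew _ _).symm
      rw [this]
      exact neg_mem (I.lie_mem ha)
    · rw [(bracket_elem_key hh).1, hah]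
    · intro i hi
      rw [(bracket_elem_key hh).2 i (Nat.ne_of_lt hi)]
      rw [pderiv_zero_on_SS (le_of_lt hi) (a.2.1 i), mul_zero, neg_zero]
    · intro i hni hij
      rw [(bracket_elem_key hh).2 i hij]
      have : a.val (X i) = 0 := by
        by_contra hne
        exact absurd (hn i hne) (not_le.2 hni)
      rw [this, map_zero, mul_zero, neg_zero]
  -- pure case : all components vanish up to `n`
  have pure : ∀ x : ↥(triangularInf K), (∀ l, l ≤ n → x.val (X l) = 0) → x ∈ I := by
    intro x hx
    have hF := x.2.2
    set F := hF.toFinset with hFdef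
    have hdec : x = ∑ j ∈ F, ⟨elemD j (x.val (X j)), elemD_mem (x.2.1 j)⟩ := by
      apply Subtype.ext
      rw [AddSubmonoidClass.coe_finset_sum]
      exact decomp x.val F (fun i hi => hF.mem_toFinset.2 hi)
    rw [hdec]
    refine sum_mem (fun j hjF => ?_)
    by_cases hjn : j ≤ n
    · have hx0 : x.val (X j) = 0 := hx j hjn
      have : (⟨elemD j (x.val (X j)), elemD_mem (x.2.1 j)⟩ : ↥(triangularInf K)) = 0 := by
        apply Subtype.ext
        show elemD j (x.val (X j)) = 0
        rw [hx0, elemD, zero_smul]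
      rw [this]; exact zero_mem _
    · push_neg at hjn
      obtain ⟨e, he, he1, he2, he3⟩ := key j (lt_of_le_of_lt hmn hjn) _ (x.2.1 j)
      have : (⟨elemD j (x.val (X j)), elemD_mem (x.2.1 j)⟩ : ↥(triangularInf K)) = e := by
        apply Subtype.ext
        refine derivation_ext (fun i => ?_)
        show elemD j (x.val (X j)) (X i) = e.val (X i)
        by_cases hij : i = j
        · subst hij; rw [elemD_X_self, he1]
        · rw [elemD_X_ne _ _ hij]
          rcases lt_or_gt_of_ne hij with hlt | hgt
          · rw [he2 i hlt]
          · rw [he3 i (lt_trans hjn hgt) hij]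
      rw [this]; exact he
  -- downward induction
  have main : ∀ d k, m ≤ k → n ≤ k + d →
      ∀ x : ↥(triangularInf K), (∀ l, l ≤ k → x.val (X l) = 0) → x ∈ I := by
    intro d
    induction d with
    | zero => intro k hk hnk x hx; exact pure x (fun l hl => hx l (le_trans hl (by omega)))
    | succ d ihd =>
      intro k hk hnk x hx
      by_cases hkn : n ≤ k
      · exact pure x (fun l hl => hx l (le_trans hl hkn))
      · obtain ⟨e, he, he1, he2, he3⟩ := key (k+1) (by omega) _ (x.2.1 (k+1))
        have hxe : x - e ∈ I := by
          refine ihd (k+1) (by omega) (by omega) _ (fun l hl => ?_)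
          have hval : (x - e).val (X l) = x.val (X l) - e.val (X l) := by
            rw [show ((x - e).val : Derivation K (MvPolynomial ℕ K) (MvPolynomial ℕ K))
              = x.val - e.val from rfl]
            rfl
          rw [hval]
          rcases Nat.lt_or_ge l (k+1) with hlk | hlk
          · rw [hx l (by omega), he2 l hlk, sub_zero]
          · have hleq : l = k + 1 := by omega
            subst hleq
            rw [he1, sub_self]
        have := add_mem hxe he
        rwa [sub_add_cancel] at this
  intro x hx
  exact main n m (le_refl m) (by omega) x hx

/-! ### submodule theory for the slices -/

lemma degX_zero (t : ℕ) : degX t (0 : MvPolynomial ℕ K) = 0 := by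
  rw [degX, map_zero, Polynomial.natDegree_zero]

lemma degX_le_of {t e : ℕ} {f : MvPolynomial ℕ K} (h : ∀ k, e < k → cf t k f = 0) :
    degX t f ≤ e := Polynomial.natDegree_le_iff_coeff_eq_zero.2 (fun m hm => h m hm)

lemma SS_zero_eq_C {w : MvPolynomial ℕ K} (hw : w ∈ SS K 0) : ∃ c : K, w = C c := by
  rw [SS] at hw
  have hempty : {j : ℕ | j < 0} = ∅ := by ext j; simp
  rw [hempty, supported_empty, Algebra.mem_bot] at hw
  obtain ⟨c, rfl⟩ := hw
  exact ⟨c, rfl⟩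

lemma natCast_C (n : ℕ) : ((n : ℕ) : MvPolynomial ℕ K) = C ((n : ℕ) : K) := by
  rw [map_natCast]

/-- triangular submodules of `SS m`. -/
def IsTM (K : Type*) [Field K] (m : ℕ) (W : Submodule K (MvPolynomial ℕ K)) : Prop :=
  (∀ w ∈ W, w ∈ SS K m) ∧ ∀ i, i < m → ∀ p ∈ SS K i, ∀ w ∈ W, p * pderiv i w ∈ W

def IIst (K : Type*) [Field K] (m : ℕ) : Prop :=
  ∀ W : Submodule K (MvPolynomial ℕ K), IsTM K m W →
  ∀ s : ℕ, 1 ≤ s → ∀ u₀ : MvPolynomial ℕ K, u₀ ≠ 0 →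
  (∀ p ∈ SS K m, p ^ s * u₀ ∈ W) → ∀ f ∈ SS K m, f ∈ W

def IIIst (K : Type*) [Field K] (m : ℕ) : Prop :=
  ∀ V W : Submodule K (MvPolynomial ℕ K), IsTM K m V → IsTM K m W →
  (∀ x ∈ V, x ∈ W) ∨ (∀ x ∈ W, x ∈ V)

/-- the shifted module `{w ∈ SS t | w * X t ^ e ∈ W}`. -/
def shiftM (K : Type*) [Field K] (t e : ℕ) (W : Submodule K (MvPolynomial ℕ K)) :
    Submodule K (MvPolynomial ℕ K) :=
  (Subalgebra.toSubmodule (SS K t)) ⊓ W.comap (LinearMap.mulRight K ((X t : MvPolynomial ℕ K) ^ e))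

lemma mem_shiftM {t e : ℕ} {W : Submodule K (MvPolynomial ℕ K)} {w : MvPolynomial ℕ K} :
    w ∈ shiftM K t e W ↔ w ∈ SS K t ∧ w * X t ^ e ∈ W := Iff.rfl

lemma shiftM_TM {t e : ℕ} {W : Submodule K (MvPolynomial ℕ K)} (hW : IsTM K (t+1) W) :
    IsTM K t (shiftM K t e W) := by
  constructor
  · exact fun w hw => (mem_shiftM.1 hw).1
  · intro i hi p hp w hw
    obtain ⟨hw1, hw2⟩ := mem_shiftM.1 hw
    refine mem_shiftM.2 ⟨mul_mem (SS_mono (le_of_lt hi) hp) (pderiv_mem_SS hw1), ?_⟩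
    have hkey : (p * pderiv i w) * X t ^ e = p * pderiv i (w * X t ^ e) := by
      rw [pderiv_mul, pderiv_pow, pderiv_X_of_ne (Nat.ne_of_lt' hi), mul_zero, mul_zero,
        add_zero]
      ring
    rw [hkey]
    exact hW.2 i (by omega) p hp _ hw2

/-- Key Lemma: from an element of `W` of degree `> e` in the top variable, all of
`SS t · X t ^ e` lies in `W`. -/
lemma KL {t : ℕ} (hII : IIst K t) {W : Submodule K (MvPolynomial ℕ K)}
    (hW : IsTM K (t+1) W) {h : MvPolynomial ℕ K} (hh : h ∈ W) :
    ∀ e, e < degX t h → ∀ w ∈ SS K t, w * X t ^ e ∈ W := by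
  intro e
  induction e using Nat.strong_induction_on with
  | _ e ihe =>
    intro he w hw
    have hh0 : h ≠ 0 := by
      intro h0
      rw [h0, degX_zero] at he
      omega
    set d := degX t h with hd
    set u₀ := cf t d h with hu₀
    have hu₀ne : u₀ ≠ 0 := cf_degX_ne_zero hh0
    have hu₀SS : u₀ ∈ SS K t := cf_mem_SS (hW.1 h hh) d
    set s := d - e with hs
    have hs1 : 1 ≤ s := by omega
    -- the iterates
    have hiter : ∀ p, p ∈ SS K t → ∀ jj, jj ≤ d →
        ((fun y => p * pderiv t y)^[jj] h ∈ W ∧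
         (∀ k, d - jj < k → cf t k ((fun y => p * pderiv t y)^[jj] h) = 0) ∧
         cf t (d - jj) ((fun y => p * pderiv t y)^[jj] h)
           = ((∏ i ∈ Finset.range jj, (d - i) : ℕ) : MvPolynomial ℕ K) * (p ^ jj * u₀)) := by
      intro p hp jj
      induction jj with
      | zero =>
        intro _
        simp only [Function.iterate_zero, id_eq, Finset.range_zero, Finset.prod_empty,
          Nat.cast_one, one_mul, pow_zero, Nat.sub_zero]
        exact ⟨hh, fun k hk => cf_eq_zero_of_degX_lt (by omega), by trivial⟩
      | succ jj ihjj =>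
        intro hjd
        obtain ⟨ih1, ih2, ih3⟩ := ihjj (by omega)
        rw [Function.iterate_succ_apply']
        set y := (fun y => p * pderiv t y)^[jj] h with hy
        have hySS : y ∈ SS K (t+1) := hW.1 y ih1
        refine ⟨hW.2 t (Nat.lt_succ_self t) p hp y ih1, ?_, ?_⟩
        · intro k hk
          rw [cf_mul_left _ hp, cf_pderiv, ih2 (k+1) (by omega), zero_mul, mul_zero]
        · have hdjj : d - jj = (d - (jj+1)) + 1 := by omega
          rw [cf_mul_left _ hp, cf_pderiv, ← hdjj, ih3]
          rw [Finset.prod_range_succ]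
          have hcast : ((d - (jj+1) : ℕ) : MvPolynomial ℕ K) + 1
              = ((d - jj : ℕ) : MvPolynomial ℕ K) := by
            rw [show (d - jj) = (d - (jj+1)) + 1 from hdjj]
            push_cast
            ring
          rw [hcast]
          push_cast
          ring
    -- conclude via II at level t applied to the shifted module
    have hshift : ∀ p, p ∈ SS K t → p ^ s * u₀ ∈ shiftM K t e W := by
      intro p hp
      obtain ⟨hq1, hq2, hq3⟩ := hiter p hp s (by omega)
      set qs := (fun y => p * pderiv t y)^[s] h with hqs
      have hde : d - s = e := by omega
      rw [hde] at hq2 hq3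
      have hqdeg : degX t qs ≤ e := degX_le_of hq2
      have hrec := reconstruct (t := t) (f := qs) (n := e + 1) (Nat.lt_succ_of_le hqdeg)
      rw [Finset.sum_range_succ] at hrec
      have hlowmem : ∑ k ∈ Finset.range e, cf t k qs * X t ^ k ∈ W := by
        refine sum_mem (fun k hk => ?_)
        exact ihe k (Finset.mem_range.1 hk) (lt_trans (Finset.mem_range.1 hk) he) _
          (cf_mem_SS (hW.1 qs hq1) k)
      have hlead : cf t e qs * X t ^ e ∈ W := by
        have heq : cf t e qs * X t ^ e
            = qs - ∑ k ∈ Finset.range e, cf t k qs * X t ^ k :=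
          eq_sub_of_add_eq' hrec.symm
        rw [heq]
        exact sub_mem hq1 hlowmem
      rw [hq3] at hlead
      -- divide by the nonzero constant
      set CC : ℕ := ∏ i ∈ Finset.range s, (d - i) with hCC
      have hCCpos : 0 < CC := by
        refine Finset.prod_pos (fun i hi => ?_)
        have := Finset.mem_range.1 hi
        omega
      have hCCne : ((CC : ℕ) : K) ≠ 0 := Nat.cast_ne_zero.2 hCCpos.ne'
      have hrw : ((CC : ℕ) : MvPolynomial ℕ K) * (p ^ s * u₀) * X t ^ e
          = ((CC : ℕ) : K) • (p ^ s * u₀ * X t ^ e) := by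
        rw [natCast_C, C_mul']
        rw [smul_mul_assoc]
      rw [hrw] at hlead
      have := Submodule.smul_mem W (((CC : ℕ) : K))⁻¹ hlead
      rw [smul_smul, inv_mul_cancel₀ hCCne, one_smul] at this
      exact mem_shiftM.2 ⟨mul_mem (pow_mem hp s) hu₀SS, this⟩
    have := hII (shiftM K t e W) (shiftM_TM hW) s hs1 u₀ hu₀ne hshift w hw
    exact (mem_shiftM.1 this).2

/-! ### the main induction : II and III at every level -/

lemma II_and_III : ∀ m, IIst K m ∧ IIIst K m := by
  intro m
  induction m with
  | zero =>
    constructor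
    · intro W hW s hs u₀ hu₀ hyp f hf
      have hu₀W : u₀ ∈ W := by
        have := hyp 1 (one_mem _)
        rwa [one_pow, one_mul] at this
      obtain ⟨c₀, hc₀⟩ := SS_zero_eq_C (hW.1 u₀ hu₀W)
      have hc₀ne : c₀ ≠ 0 := fun h0 => hu₀ (by rw [hc₀, h0, map_zero])
      obtain ⟨e, he⟩ := SS_zero_eq_C hf
      have hfe : f = (e * c₀⁻¹) • u₀ := by
        rw [hc₀, he, smul_eq_C_mul, ← C_mul, mul_assoc, inv_mul_cancel₀ hc₀ne, mul_one]
      rw [hfe]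
      exact Submodule.smul_mem _ _ hu₀W
    · intro V W hV hW
      by_cases hVW : ∀ x ∈ V, x ∈ W
      · left; exact hVW
      · right
        push_neg at hVW
        obtain ⟨v, hvV, hvW⟩ := hVW
        obtain ⟨cv, hcv⟩ := SS_zero_eq_C (hV.1 v hvV)
        have hcvne : cv ≠ 0 := fun h0 => hvW (by rw [hcv, h0, map_zero]; exact zero_mem _)
        intro x hx
        obtain ⟨cx, hcx⟩ := SS_zero_eq_C (hW.1 x hx)
        have hxe : x = (cx * cv⁻¹) • v := by
          rw [hcv, hcx, smul_eq_C_mul, ← C_mul, mul_assoc, inv_mul_cancel₀ hcvne, mul_one]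
        rw [hxe]
        exact Submodule.smul_mem _ _ hvV
  | succ t ih =>
    obtain ⟨hII_t, hIII_t⟩ := ih
    constructor
    · -- II (t+1)
      intro W hW s hs u₀ hu₀ hyp f hf
      set D := degX t f with hD
      have hh : X t ^ ((D+1)*s) * u₀ ∈ W := by
        have := hyp (X t ^ (D+1)) (pow_mem (X_mem_SS (Nat.lt_succ_self t)) _)
        rwa [← pow_mul] at this
      have hdeg : D < degX t (X t ^ ((D+1)*s) * u₀) := by
        have hcf : cf t (degX t u₀ + (D+1)*s) (X t ^ ((D+1)*s) * u₀) ≠ 0 := by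
          rw [cf_X_pow_mul]; exact cf_degX_ne_zero hu₀
        have h1 := le_degX_of_cf_ne_zero hcf
        have h2 : (D+1) * 1 ≤ (D+1) * s := Nat.mul_le_mul_left _ hs
        omega
      have hrec := reconstruct (t := t) (f := f) (n := D + 1) (Nat.lt_succ_self D)
      rw [hrec]
      refine sum_mem (fun k hk => ?_)
      refine KL hII_t hW hh k ?_ _ (cf_mem_SS hf k)
      have := Finset.mem_range.1 hk
      omega
    · -- III (t+1)
      intro V W hV hW
      by_cases hVW : ∀ x ∈ V, x ∈ W
      · left; exact hVW
      right
      push_neg at hVW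
      obtain ⟨f, hfV, hfW⟩ := hVW
      intro g hgW
      by_cases hg0 : g = 0
      · rw [hg0]; exact zero_mem _
      have hfSS : f ∈ SS K (t+1) := hV.1 f hfV
      have hgSS : g ∈ SS K (t+1) := hW.1 g hgW
      set df := degX t f with hdf
      set dg := degX t g with hdg
      have hdgf : dg ≤ df := by
        by_contra hlt
        push_neg at hlt
        refine hfW ?_
        have hrec := reconstruct (t := t) (f := f) (n := df + 1) (Nat.lt_succ_self _)
        rw [hrec]
        refine sum_mem (fun k hk => ?_)
        refine KL hII_t hW hgW k ?_ _ (cf_mem_SS hfSS k)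
        have := Finset.mem_range.1 hk
        omega
      rcases lt_or_eq_of_le hdgf with hlt | heq
      · have hrec := reconstruct (t := t) (f := g) (n := dg + 1) (Nat.lt_succ_self _)
        rw [hrec]
        refine sum_mem (fun k hk => ?_)
        refine KL hII_t hV hfV k ?_ _ (cf_mem_SS hgSS k)
        have := Finset.mem_range.1 hk
        omega
      · -- heq : dg = df
        have hlowV : ∀ k, k < df → ∀ w, w ∈ SS K t → w * X t ^ k ∈ V :=
          fun k hk w hw => KL hII_t hV hfV k hk w hw
        have hlowW : ∀ k, k < df → ∀ w, w ∈ SS K t → w * X t ^ k ∈ W :=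
          fun k hk w hw => KL hII_t hW hgW k (by omega) w hw
        have hrecf := reconstruct (t := t) (f := f) (n := df + 1) (Nat.lt_succ_self _)
        have hrecg := reconstruct (t := t) (f := g) (n := dg + 1) (Nat.lt_succ_self _)
        rw [heq] at hrecg
        rw [Finset.sum_range_succ] at hrecf hrecg
        have hleadf : cf t df f * X t ^ df ∈ V := by
          have heqf : cf t df f * X t ^ df
              = f - ∑ k ∈ Finset.range df, cf t k f * X t ^ k := eq_sub_of_add_eq' hrecf.symm
          rw [heqf]
          exact sub_mem hfV (sum_mem (fun k hk =>
            hlowV k (Finset.mem_range.1 hk) _ (cf_mem_SS hfSS k)))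
        have hleadg : cf t df g * X t ^ df ∈ W := by
          have heqg : cf t df g * X t ^ df
              = g - ∑ k ∈ Finset.range df, cf t k g * X t ^ k := eq_sub_of_add_eq' hrecg.symm
          rw [heqg]
          exact sub_mem hgW (sum_mem (fun k hk =>
            hlowW k (Finset.mem_range.1 hk) _ (cf_mem_SS hgSS k)))
        rcases hIII_t (shiftM K t df V) (shiftM K t df W) (shiftM_TM hV) (shiftM_TM hW)
          with hc | hc
        · exfalso
          refine hfW ?_
          have h1 : cf t df f ∈ shiftM K t df V := mem_shiftM.2 ⟨cf_mem_SS hfSS df, hleadf⟩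
          have h3 := (mem_shiftM.1 (hc _ h1)).2
          rw [hrecf]
          exact add_mem (sum_mem (fun k hk =>
            hlowW k (Finset.mem_range.1 hk) _ (cf_mem_SS hfSS k))) h3
        · have h1 : cf t df g ∈ shiftM K t df W := mem_shiftM.2 ⟨cf_mem_SS hgSS df, hleadg⟩
          have h3 := (mem_shiftM.1 (hc _ h1)).2
          rw [hrecg]
          exact add_mem (sum_mem (fun k hk =>
            hlowV k (Finset.mem_range.1 hk) _ (cf_mem_SS hgSS k))) h3

/-! ### slices of ideals and the final glue -/

lemma val_sub_X (x y : ↥(triangularInf K)) (l : ℕ) :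
    (x - y).val (X l) = x.val (X l) - y.val (X l) := rfl

lemma val_add_X (x y : ↥(triangularInf K)) (l : ℕ) :
    (x + y).val (X l) = x.val (X l) + y.val (X l) := rfl

lemma val_smul_X (c : K) (x : ↥(triangularInf K)) (l : ℕ) :
    (c • x).val (X l) = c • (x.val (X l)) := rfl

lemma val_zero_X (l : ℕ) : (0 : ↥(triangularInf K)).val (X l) = 0 := rfl

/-- the `m`-th slice of an ideal. -/
def slice (m : ℕ) (I : LieIdeal K ↥(triangularInf K)) : Submodule K (MvPolynomial ℕ K) where
  carrier := {w | ∃ a : ↥(triangularInf K), a ∈ I ∧ (∀ j, j < m → a.val (X j) = 0)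
    ∧ a.val (X m) = w}
  add_mem' := by
    rintro x y ⟨a, ha, haz, hav⟩ ⟨b, hb, hbz, hbv⟩
    exact ⟨a + b, add_mem ha hb,
      fun j hj => by rw [val_add_X, haz j hj, hbz j hj, add_zero],
      by rw [val_add_X, hav, hbv]⟩
  zero_mem' := ⟨0, zero_mem _, fun j _ => val_zero_X j, val_zero_X m⟩
  smul_mem' := by
    rintro c x ⟨a, ha, haz, hav⟩
    exact ⟨c • a, Submodule.smul_mem _ _ ha,
      fun j hj => by rw [val_smul_X, haz j hj, smul_zero],
      by rw [val_smul_X, hav]⟩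

lemma slice_TM (m : ℕ) (I : LieIdeal K ↥(triangularInf K)) : IsTM K m (slice m I) := by
  constructor
  · rintro w ⟨a, ha, haz, hav⟩
    rw [← hav]
    exact a.2.1 m
  · rintro i hi p hp w ⟨a, ha, haz, hav⟩
    refine ⟨⁅ED hp, a⁆, I.lie_mem ha, ?_, ?_⟩
    · intro j hj
      show (⁅elemD i p, a.val⁆) (X j) = 0
      rw [commutator_X, haz j hj, map_zero, elemD_X]
      by_cases hji : j = i
      · rw [if_pos hji]
        rw [derivation_zero_on_supported a.val (fun l hl => haz l hl) (SS_mono (le_of_lt hi) hp)]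
        exact sub_self 0
      · rw [if_neg hji, map_zero, sub_self]
    · show (⁅elemD i p, a.val⁆) (X m) = p * pderiv i w
      rw [commutator_X, hav, elemD_X, if_neg (Nat.ne_of_gt hi), map_zero, sub_zero,
        elemD_apply]

lemma exists_nonzero_slice {I : LieIdeal K ↥(triangularInf K)} (h : I ≠ ⊥) :
    ∃ m, ∃ w, w ∈ slice m I ∧ w ≠ 0 := by
  obtain ⟨x, hxI, hx0⟩ : ∃ x ∈ I, x ≠ 0 := by
    by_contra hc
    push_neg at hc
    exact h (by rwa [LieSubmodule.eq_bot_iff])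
  have hex2 : ∃ i, x.val (X i) ≠ 0 := by
    by_contra hc
    push_neg at hc
    refine hx0 (Subtype.ext ?_)
    exact derivation_ext (fun i => by rw [hc i]; rfl)
  refine ⟨Nat.find hex2, x.val (X (Nat.find hex2)),
    ⟨x, hxI, fun l hl => not_not.1 (Nat.find_min hex2 hl), rfl⟩, Nat.find_spec hex2⟩

lemma main_part1 {I : LieIdeal K ↥(triangularInf K)} {m : ℕ}
    (hm : ∃ w, w ∈ slice m I ∧ w ≠ 0) :
    ∀ x : ↥(triangularInf K), (∀ l, l ≤ m → x.val (X l) = 0) → x ∈ I := by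
  obtain ⟨w, ⟨a, ha, haz, hav⟩, hw0⟩ := hm
  obtain ⟨b, hb, hbz, c, hc, hbC⟩ := exists_const ha haz (by rw [hav]; exact hw0)
  exact N_subset hb hbz hc hbC

lemma zeros_below_min {I : LieIdeal K ↥(triangularInf K)}
    (hex : ∃ m, ∃ w, w ∈ slice m I ∧ w ≠ 0) {x : ↥(triangularInf K)} (hx : x ∈ I) :
    ∀ j, j < Nat.find hex → x.val (X j) = 0 := by
  intro j hj
  by_contra hne
  have hex2 : ∃ i, x.val (X i) ≠ 0 := ⟨j, hne⟩
  have hi₀le : Nat.find hex2 ≤ j := Nat.find_min' hex2 hne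
  have hsl : ∃ w, w ∈ slice (Nat.find hex2) I ∧ w ≠ 0 :=
    ⟨x.val (X (Nat.find hex2)),
      ⟨x, hx, fun l hl => not_not.1 (Nat.find_min hex2 hl), rfl⟩, Nat.find_spec hex2⟩
  exact Nat.find_min hex (by omega) hsl

lemma mem_of_parts {I : LieIdeal K ↥(triangularInf K)} {m : ℕ}
    (hsl : ∃ w, w ∈ slice m I ∧ w ≠ 0) {x : ↥(triangularInf K)}
    (hz : ∀ j, j < m → x.val (X j) = 0) (hm : x.val (X m) ∈ slice m I) : x ∈ I := by
  obtain ⟨a, ha, haz, hav⟩ := hm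
  have hxa : x - a ∈ I := by
    refine main_part1 hsl _ (fun l hl => ?_)
    rw [val_sub_X]
    rcases Nat.lt_or_ge l m with hlm | hlm
    · rw [hz l hlm, haz l hlm, sub_zero]
    · have : l = m := by omega
      subst this
      rw [hav, sub_self]
  have := add_mem hxa ha
  rwa [sub_add_cancel] at this

end VB

/-- (1) Every nonzero ideal `I` of the Lie algebra `u_∞` contains the
ideal `u_{∞,m} = ⊕_{j ≥ m} P_{j-1}∂_j` for some `m ≥ 1` (zero-based: it contains every
element `a` of `u_∞` with `a (X j) = 0` for all `j` with `j + 1 < m`).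
(2) The ideals of `u_∞` are totally ordered by inclusion: `u_∞` is uniserial. -/
theorem triangularInf_ideals
    (K : Type*) [Field K] [CharZero K] :
    (∀ I : LieIdeal K ↥(triangularInf K), I ≠ ⊥ →
      ∃ m : ℕ, 1 ≤ m ∧ ∀ a : ↥(triangularInf K),
        (∀ j : ℕ, j + 1 < m → a.val (X j) = 0) → a ∈ I) ∧
    (∀ I J : LieIdeal K ↥(triangularInf K), I ≤ J ∨ J ≤ I) := by
  classical
  constructor
  · intro I hI
    obtain ⟨m₀, hm₀⟩ := VB.exists_nonzero_slice hI
    exact ⟨m₀ + 2, by omega, fun a ha => VB.main_part1 hm₀ a (fun l hl => ha l (by omega))⟩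
  · intro I J
    by_cases hI : I = ⊥
    · left; rw [hI]; exact bot_le
    by_cases hJ : J = ⊥
    · right; rw [hJ]; exact bot_le
    have hexI := VB.exists_nonzero_slice hI
    have hexJ := VB.exists_nonzero_slice hJ
    set mI := Nat.find hexI with hmI
    set mJ := Nat.find hexJ with hmJ
    rcases lt_trichotomy mI mJ with hlt | heq | hgt
    · right
      intro x hxJ
      refine VB.main_part1 (Nat.find_spec hexI) x (fun l hl => ?_)
      exact VB.zeros_below_min hexJ hxJ l (by omega)
    · have hslJ : ∃ w, w ∈ VB.slice mI J ∧ w ≠ 0 := by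
        rw [heq]; exact Nat.find_spec hexJ
      have hslI : ∃ w, w ∈ VB.slice mI I ∧ w ≠ 0 := Nat.find_spec hexI
      rcases (VB.II_and_III (K := K) mI).2 (VB.slice mI I) (VB.slice mI J)
        (VB.slice_TM mI I) (VB.slice_TM mI J) with hc | hc
      · left
        intro x hxI
        have hz : ∀ j, j < mI → x.val (X j) = 0 :=
          fun j hj => VB.zeros_below_min hexI hxI j hj
        exact VB.mem_of_parts hslJ hz (hc _ ⟨x, hxI, hz, rfl⟩)
      · right
        intro x hxJ
        have hz : ∀ j, j < mI → x.val (X j) = 0 :=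
          fun j hj => VB.zeros_below_min hexJ hxJ j (by omega)
        exact VB.mem_of_parts hslI hz (hc _ ⟨x, hxJ, hz, rfl⟩)
    · left
      intro x hxI
      refine VB.main_part1 (Nat.find_spec hexJ) x (fun l hl => ?_)
      exact VB.zeros_below_min hexI hxI l (by omega)
end
end

section
/- (1) The Lie algebra u_∞ is not solvable. (2) The centre of u_∞ is zero. (3) For an element u ∈ u_∞, the inner derivation ad(u) of u_∞ is a nilpotent endomorphism (i.e., (ad u)^m = 0 for some natural number m) if and only if u = 0; nevertheless, every inner derivation ad(u), u ∈ u_∞, is locally nilpotent (for every v ∈ u_∞ there exists m with (ad u)^m(v) = 0). -/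
open MvPolynomial

noncomputable section


section AuxTriangular
variable {K : Type*} [Field K]

/-- `pdv N c` is the triangular-style derivation `c ∂_N`. -/
def pdv (N : ℕ) (c : MvPolynomial ℕ K) :
    Derivation K (MvPolynomial ℕ K) (MvPolynomial ℕ K) :=
  mkDerivation K (Pi.single N c)

theorem pdv_X (N : ℕ) (c : MvPolynomial ℕ K) (k : ℕ) :
    pdv N c (X k) = if k = N then c else 0 := by
  rw [pdv, mkDerivation_X]; exact Pi.single_apply N c k

theorem pdv_zero (N : ℕ) : (pdv N (0 : MvPolynomial ℕ K)) = 0 :=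
  derivation_ext fun i => by simp [pdv_X]

theorem pdv_add (N : ℕ) (x y : MvPolynomial ℕ K) :
    pdv N x + pdv N y = pdv N (x + y) :=
  derivation_ext fun i => by
    rw [Derivation.add_apply, pdv_X, pdv_X, pdv_X]; split_ifs <;> simp

theorem derivation_zero_on_supported (s : Set ℕ)
    (D : Derivation K (MvPolynomial ℕ K) (MvPolynomial ℕ K))
    (h : ∀ j ∈ s, D (X j) = 0)
    {p : MvPolynomial ℕ K} (hp : p ∈ supported K s) : D p = 0 := by
  rw [supported_eq_adjoin_X] at hp
  induction hp using Algebra.adjoin_induction with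
  | mem x hx => obtain ⟨j, hj, rfl⟩ := hx; exact h j hj
  | algebraMap r => rw [Derivation.map_algebraMap]
  | add x y hx hy ihx ihy => rw [map_add, ihx, ihy, add_zero]
  | mul x y hx hy ihx ihy => rw [Derivation.leibniz, ihx, ihy, smul_zero, smul_zero, add_zero]

theorem pdv_supported {N n : ℕ} (hNn : n ≤ N) (c : MvPolynomial ℕ K) {p : MvPolynomial ℕ K}
    (hp : p ∈ supported K {j | j < n}) : pdv N c p = 0 := by
  refine derivation_zero_on_supported _ _ (fun j hj => ?_) hp
  rw [pdv_X, if_neg]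
  exact Nat.ne_of_lt (lt_of_lt_of_le hj hNn)

theorem pdv_mem {N : ℕ} {c : MvPolynomial ℕ K} (hc : c ∈ supported K {j | j < N}) :
    pdv N c ∈ triSetInf K := by
  constructor
  · intro i
    rw [pdv_X]
    split
    · next h => subst h; exact hc
    · exact zero_mem _
  · refine Set.Finite.subset (Set.finite_singleton N) ?_
    intro i hi
    by_contra hcon
    simp only [Set.mem_singleton_iff] at hcon
    exact hi (by rw [pdv_X, if_neg hcon])

end AuxTriangular
section AuxNil
variable {K : Type*} [Field K]

theorem iter_zero (D : Derivation K (MvPolynomial ℕ K) (MvPolynomial ℕ K)) (m : ℕ) :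
    (⇑D)^[m] 0 = 0 := by
  induction m with
  | zero => rfl
  | succ m ih => rw [Function.iterate_succ_apply, map_zero, ih]

theorem iter_stable {D : Derivation K (MvPolynomial ℕ K) (MvPolynomial ℕ K)}
    {x : MvPolynomial ℕ K} {a : ℕ} (h : (⇑D)^[a] x = 0) {k : ℕ} (hk : a ≤ k) :
    (⇑D)^[k] x = 0 := by
  obtain ⟨j, rfl⟩ := Nat.exists_eq_add_of_le hk
  rw [Nat.add_comm, Function.iterate_add_apply, h, iter_zero]

theorem iter_add (D : Derivation K (MvPolynomial ℕ K) (MvPolynomial ℕ K))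
    (x y : MvPolynomial ℕ K) (m : ℕ) :
    (⇑D)^[m] (x + y) = (⇑D)^[m] x + (⇑D)^[m] y := by
  induction m generalizing x y with
  | zero => rfl
  | succ m ih => rw [Function.iterate_succ_apply, map_add, ih,
      Function.iterate_succ_apply, Function.iterate_succ_apply]

theorem iter_mul_mem_span (D : Derivation K (MvPolynomial ℕ K) (MvPolynomial ℕ K))
    (x y : MvPolynomial ℕ K) (m : ℕ) :
    (⇑D)^[m] (x * y) ∈ Submodule.span K
      {q : MvPolynomial ℕ K | ∃ i j, i + j = m ∧ q = (⇑D)^[i] x * (⇑D)^[j] y} := by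
  induction m with
  | zero => exact Submodule.subset_span ⟨0, 0, rfl, rfl⟩
  | succ m ih =>
    rw [Function.iterate_succ_apply']
    refine Submodule.span_induction
      (p := fun z _ => D z ∈ Submodule.span K
        {q : MvPolynomial ℕ K | ∃ i j, i + j = m + 1 ∧ q = (⇑D)^[i] x * (⇑D)^[j] y})
      ?_ ?_ ?_ ?_ ih
    · rintro z ⟨i, j, hij, rfl⟩
      show D _ ∈ _
      rw [Derivation.leibniz, smul_eq_mul, smul_eq_mul]
      refine add_mem (Submodule.subset_span ⟨i, j + 1, by omega, ?_⟩)
        (Submodule.subset_span ⟨i + 1, j, by omega, ?_⟩)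
      · rw [Function.iterate_succ_apply', mul_comm]
      · rw [Function.iterate_succ_apply', mul_comm]
    · show D 0 ∈ _
      rw [map_zero]; exact zero_mem _
    · intro a b _ _ ha hb
      show D (a + b) ∈ _
      rw [map_add]; exact add_mem ha hb
    · intro r a _ ha
      show D (r • a) ∈ _
      rw [Derivation.map_smul]; exact Submodule.smul_mem _ r ha

theorem iter_mul_zero {D : Derivation K (MvPolynomial ℕ K) (MvPolynomial ℕ K)}
    {x y : MvPolynomial ℕ K} {a b : ℕ} (hx : (⇑D)^[a] x = 0) (hy : (⇑D)^[b] y = 0) :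
    (⇑D)^[a + b] (x * y) = 0 := by
  have h := iter_mul_mem_span D x y (a + b)
  have hle : {q : MvPolynomial ℕ K | ∃ i j, i + j = a + b ∧ q = (⇑D)^[i] x * (⇑D)^[j] y}
      ⊆ (⊥ : Submodule K (MvPolynomial ℕ K)) := by
    rintro q ⟨i, j, hij, rfl⟩
    have hab : a ≤ i ∨ b ≤ j := by omega
    rw [SetLike.mem_coe, Submodule.mem_bot]
    rcases hab with h1 | h1
    · rw [iter_stable hx h1, zero_mul]
    · rw [iter_stable hy h1, mul_zero]
  rw [← Submodule.mem_bot (R := K)]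
  exact (Submodule.span_le.2 hle) h

end AuxNil
section AuxA
variable {K : Type*} [Field K]

theorem iter_mem_supported {D : Derivation K (MvPolynomial ℕ K) (MvPolynomial ℕ K)}
    (hD : D ∈ triSetInf K) (N : ℕ) {p : MvPolynomial ℕ K}
    (hp : p ∈ supported K {j | j < N}) (m : ℕ) :
    (⇑D)^[m] p ∈ supported K {j | j < N} := by
  induction m with
  | zero => exact hp
  | succ m ih =>
    rw [Function.iterate_succ_apply']
    exact Derivation.mem_supported_of_forall_mem' _ D (triSetInf_stable hD N) ih

/-- Every triangular derivation is a locally nilpotent derivation of `P_∞`. -/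
theorem locnil_poly {D : Derivation K (MvPolynomial ℕ K) (MvPolynomial ℕ K)}
    (hD : D ∈ triSetInf K) (p : MvPolynomial ℕ K) :
    ∃ m, (⇑D)^[m] p = 0 := by
  suffices h : ∀ n : ℕ, ∀ p ∈ supported K {j : ℕ | j < n}, ∃ m, (⇑D)^[m] p = 0 by
    refine h (p.vars.sup id + 1) p ?_
    refine supported_mono (s := (↑p.vars : Set ℕ)) ?_ (mem_supported_vars p)
    intro j hj
    have := Finset.le_sup (f := id) (by exact_mod_cast hj)
    simpa using Nat.lt_succ_of_le this
  intro n
  induction n with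
  | zero =>
    intro p hp
    have : {j : ℕ | j < 0} = (∅ : Set ℕ) := by ext j; simp
    rw [this, supported_empty, Algebra.mem_bot] at hp
    obtain ⟨r, rfl⟩ := hp
    exact ⟨1, by rw [Function.iterate_one, Derivation.map_algebraMap]⟩
  | succ n ih =>
    intro p hp
    rw [supported_eq_adjoin_X] at hp
    induction hp using Algebra.adjoin_induction with
    | mem x hx =>
      obtain ⟨j, hj, rfl⟩ := hx
      have hj' : j < n + 1 := hj
      obtain ⟨m, hm⟩ := ih (D (X j))
        (supported_mono (fun l hl => by
          have hl' : l < j := hl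
          exact (Set.mem_setOf_eq ▸ by omega : l ∈ {j : ℕ | j < n})) (hD.1 j))
      exact ⟨m + 1, by rwa [Function.iterate_succ_apply]⟩
    | algebraMap r =>
      exact ⟨1, by rw [Function.iterate_one, Derivation.map_algebraMap]⟩
    | add x y hx hy ihx ihy =>
      obtain ⟨a, ha⟩ := ihx
      obtain ⟨b, hb⟩ := ihy
      exact ⟨a + b, by rw [iter_add, iter_stable ha (by omega), iter_stable hb (by omega),
        add_zero]⟩
    | mul x y hx hy ihx ihy =>
      obtain ⟨a, ha⟩ := ihx
      obtain ⟨b, hb⟩ := ihy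
      exact ⟨a + b, iter_mul_zero ha hb⟩

end AuxA
section AuxBr
variable {K : Type*} [Field K]

/-- For a triangular derivation `u` vanishing above `N`, `⁅u, c ∂_N⁆ = u(c) ∂_N`. -/
theorem br {u : Derivation K (MvPolynomial ℕ K) (MvPolynomial ℕ K)}
    (hu : u ∈ triSetInf K) {N : ℕ} (hcut : ∀ k, N < k → u (X k) = 0)
    (c : MvPolynomial ℕ K) :
    ⁅u, pdv N c⁆ = pdv N (u c) := by
  refine derivation_ext fun k => ?_
  rw [Derivation.commutator_apply, pdv_X, pdv_X]
  have h2 : pdv N c (u (X k)) = 0 := by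
    rcases Nat.lt_or_ge N k with h | h
    · rw [hcut k h, map_zero]
    · exact pdv_supported (le_refl N) c
        (supported_mono (fun l hl => lt_of_lt_of_le hl h) (hu.1 k))
  rw [h2]
  split_ifs with h
  · subst h; rw [sub_zero]
  · rw [map_zero, sub_zero]

/-- For a triangular derivation `v` vanishing from `n` on, `⁅a ∂_n, v⁆ = -v(a) ∂_n`. -/
theorem br2 {v : Derivation K (MvPolynomial ℕ K) (MvPolynomial ℕ K)}
    (hv : v ∈ triSetInf K) {n : ℕ} (hcut : ∀ k, n ≤ k → v (X k) = 0)
    (a : MvPolynomial ℕ K) :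
    ⁅pdv n a, v⁆ = pdv n (-(v a)) := by
  refine derivation_ext fun k => ?_
  rw [Derivation.commutator_apply, pdv_X, pdv_X]
  have h1 : pdv n a (v (X k)) = 0 := by
    rcases Nat.lt_or_ge k n with h | h
    · exact pdv_supported (le_refl n) a
        (supported_mono (fun l hl => lt_trans hl h) (hv.1 k))
    · rw [hcut k h, map_zero]
  rw [h1]
  split_ifs with h
  · rw [zero_sub]
  · rw [map_zero, sub_zero]

theorem br_iter {u : Derivation K (MvPolynomial ℕ K) (MvPolynomial ℕ K)}
    (hu : u ∈ triSetInf K) {N : ℕ} (hcut : ∀ k, N < k → u (X k) = 0)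
    (c : MvPolynomial ℕ K) (m : ℕ) :
    (fun w => ⁅u, w⁆)^[m] (pdv N c) = pdv N ((⇑u)^[m] c) := by
  induction m generalizing c with
  | zero => rfl
  | succ m ih =>
    rw [Function.iterate_succ_apply, Function.iterate_succ_apply]
    show (fun w => ⁅u, w⁆)^[m] ⁅u, pdv N c⁆ = _
    rw [br hu hcut c, ih]

theorem tri_lie_mem {a b : Derivation K (MvPolynomial ℕ K) (MvPolynomial ℕ K)}
    (ha : a ∈ triSetInf K) (hb : b ∈ triSetInf K) : ⁅a, b⁆ ∈ triSetInf K :=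
  (triangularInf K).lie_mem' ha hb

theorem tri_sub_mem {a b : Derivation K (MvPolynomial ℕ K) (MvPolynomial ℕ K)}
    (ha : a ∈ triSetInf K) (hb : b ∈ triSetInf K) : a - b ∈ triSetInf K := by
  have h : a - b ∈ triangularInf K := sub_mem ha hb
  exact h

theorem der_add_lie (d e f : Derivation K (MvPolynomial ℕ K) (MvPolynomial ℕ K)) :
    ⁅d + e, f⁆ = ⁅d, f⁆ + ⁅e, f⁆ :=
  Derivation.ext fun p => by
    simp only [Derivation.commutator_apply, Derivation.add_apply, map_add]; ring

theorem der_lie_add (d e f : Derivation K (MvPolynomial ℕ K) (MvPolynomial ℕ K)) :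
    ⁅d, e + f⁆ = ⁅d, e⁆ + ⁅d, f⁆ :=
  Derivation.ext fun p => by
    simp only [Derivation.commutator_apply, Derivation.add_apply, map_add]; ring

end AuxBr
section AuxLocNil
variable {K : Type*} [Field K]

/-- Local nilpotency of inner derivations of `u_∞`, at the level of plain derivations. -/
theorem locnil_ad : ∀ n : ℕ,
    ∀ u ∈ triSetInf K, (∀ k, n ≤ k → u (X k) = 0) →
    ∀ v ∈ triSetInf K, (∀ k, n ≤ k → v (X k) = 0) →
    ∃ m, (fun w => ⁅u, w⁆)^[m] v = 0 := by
  intro n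
  induction n with
  | zero =>
    intro u hu hcu v hv hcv
    refine ⟨0, ?_⟩
    show v = 0
    exact derivation_ext fun i => by rw [hcv i (Nat.zero_le _), Derivation.zero_apply]
  | succ n ih =>
    intro u hu hcu
    have ha : u (X n) ∈ supported K {j | j < n} := hu.1 n
    set a := u (X n) with ha_def
    set u' := u - pdv n a with hu'_def
    have hpa : pdv n a ∈ triSetInf K := pdv_mem ha
    have hu' : u' ∈ triSetInf K := tri_sub_mem hu hpa
    have hu'X : ∀ k, u' (X k) = u (X k) - pdv n a (X k) := fun k => rfl
    have hcu' : ∀ k, n ≤ k → u' (X k) = 0 := by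
      intro k hk
      rw [hu'X, pdv_X]
      rcases eq_or_lt_of_le hk with h | h
      · rw [if_pos h.symm, ← h, ← ha_def, sub_self]
      · rw [if_neg (by omega : ¬ k = n), hcu k (by omega), sub_zero]
    have hcu1 : ∀ k, n < k → u (X k) = 0 := fun k hk => hcu k (by omega)
    have hsplit : u = u' + pdv n a := by rw [hu'_def, sub_add_cancel]
    have inner : ∀ m1 : ℕ, ∀ v' c, v' ∈ triSetInf K → (∀ k, n ≤ k → v' (X k) = 0) →
        (fun w => ⁅u', w⁆)^[m1] v' = 0 →
        ∃ m, (fun w => ⁅u, w⁆)^[m] (v' + pdv n c) = 0 := by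
      intro m1
      induction m1 with
      | zero =>
        intro v' c hv' hcv' h0
        have h0' : v' = 0 := h0
        obtain ⟨m, hm⟩ := locnil_poly hu c
        exact ⟨m, by rw [h0', zero_add, br_iter hu hcu1 c m, hm, pdv_zero]⟩
      | succ m1 ihm =>
        intro v' c hv' hcv' h0
        have hbr : ⁅u, v'⁆ = ⁅u', v'⁆ + pdv n (-(v' a)) := by
          rw [hsplit, der_add_lie, br2 hv' hcv' a]
        have key : ⁅u, v' + pdv n c⁆ = ⁅u', v'⁆ + pdv n (u c - v' a) := by
          rw [der_lie_add, br hu hcu1 c, hbr, add_assoc, pdv_add, neg_add_eq_sub]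
        have hv'' : ⁅u', v'⁆ ∈ triSetInf K := tri_lie_mem hu' hv'
        have hcv'' : ∀ k, n ≤ k → ⁅u', v'⁆ (X k) = 0 := fun k hk => by
          rw [Derivation.commutator_apply, hcv' k hk, hcu' k hk, map_zero, map_zero, sub_zero]
        rw [Function.iterate_succ_apply] at h0
        obtain ⟨m, hm⟩ := ihm ⁅u', v'⁆ (u c - v' a) hv'' hcv'' h0
        refine ⟨m + 1, ?_⟩
        rw [Function.iterate_succ_apply]
        show (fun w => ⁅u, w⁆)^[m] ⁅u, v' + pdv n c⁆ = 0
        rw [key]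
        exact hm
    intro v hv hcv
    have hc : v (X n) ∈ supported K {j | j < n} := hv.1 n
    set c := v (X n) with hc_def
    set v' := v - pdv n c with hv'_def
    have hpc : pdv n c ∈ triSetInf K := pdv_mem hc
    have hv' : v' ∈ triSetInf K := tri_sub_mem hv hpc
    have hcv' : ∀ k, n ≤ k → v' (X k) = 0 := by
      intro k hk
      show v (X k) - pdv n c (X k) = 0
      rw [pdv_X]
      rcases eq_or_lt_of_le hk with h | h
      · rw [if_pos h.symm, ← h, ← hc_def, sub_self]
      · rw [if_neg (by omega : ¬ k = n), hcv k (by omega), sub_zero]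
    obtain ⟨m1, hm1⟩ := ih u' hu' hcu' v' hv' hcv'
    obtain ⟨m, hm⟩ := inner m1 v' c hv' hcv' hm1
    refine ⟨m, ?_⟩
    rwa [hv'_def, sub_add_cancel] at hm

end AuxLocNil
section AuxMain
variable {K : Type*} [Field K]

theorem mem_tri {K : Type*} [Field K] (u : ↥(triangularInf K)) :
    (u : Derivation K (MvPolynomial ℕ K) (MvPolynomial ℕ K)) ∈ triSetInf K := u.2

theorem tri_bound {D : Derivation K (MvPolynomial ℕ K) (MvPolynomial ℕ K)}
    (hD : D ∈ triSetInf K) : ∃ N, ∀ k, N ≤ k → D (X k) = 0 := by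
  obtain ⟨B, hB⟩ := hD.2.bddAbove
  refine ⟨B + 1, fun k hk => ?_⟩
  by_contra h
  have hB' := hB (show k ∈ {i | D (X i) ≠ 0} from h)
  omega

theorem ad_pow_coe (u : ↥(triangularInf K)) (m : ℕ) :
    ∀ v : ↥(triangularInf K),
    (((LieAlgebra.ad K ↥(triangularInf K) u) ^ m) v :
        Derivation K (MvPolynomial ℕ K) (MvPolynomial ℕ K))
      = (fun w => ⁅(u : Derivation K (MvPolynomial ℕ K) (MvPolynomial ℕ K)), w⁆)^[m]
          (v : Derivation K (MvPolynomial ℕ K) (MvPolynomial ℕ K)) := by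
  induction m with
  | zero => intro v; simp
  | succ m ih =>
    intro v
    rw [pow_succ, Module.End.mul_apply, Function.iterate_succ_apply, ih]
    congr 1

theorem iter_pow_desc {D : Derivation K (MvPolynomial ℕ K) (MvPolynomial ℕ K)}
    {c d : MvPolynomial ℕ K} (hd : D c = d) (hdd : D d = 0) (m : ℕ) :
    ∀ j, j ≤ m → (⇑D)^[j] (c ^ m) = (m.descFactorial j) • (c ^ (m - j) * d ^ j) := by
  intro j
  induction j with
  | zero => intro _; simp
  | succ j ihj =>
    intro hj
    rw [Function.iterate_succ_apply', ihj (by omega)]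
    rw [map_nsmul, Derivation.leibniz, Derivation.leibniz_pow, Derivation.leibniz_pow, hd, hdd]
    have h1 : m - j - 1 = m - (j + 1) := by omega
    have h2 : m - j = (m - (j + 1)) + 1 := by omega
    rw [h1, Nat.descFactorial_succ]
    simp only [smul_zero, smul_eq_mul, nsmul_eq_mul, Nat.cast_mul]
    ring

theorem iter_pow_factorial {D : Derivation K (MvPolynomial ℕ K) (MvPolynomial ℕ K)}
    {c d : MvPolynomial ℕ K} (hd : D c = d) (hdd : D d = 0) (m : ℕ) :
    (⇑D)^[m] (c ^ m) = (m.factorial) • d ^ m := by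
  have h := iter_pow_desc hd hdd m m (le_refl m)
  rw [Nat.sub_self, pow_zero, one_mul, Nat.descFactorial_self] at h
  exact h

theorem ev_bracket {p r q : ℕ} (hpr : p < r) (hrq : r < q) :
    ⁅(pdv r (X p) : Derivation K (MvPolynomial ℕ K) (MvPolynomial ℕ K)),
      (pdv q (X r) : Derivation K (MvPolynomial ℕ K) (MvPolynomial ℕ K))⁆
      = pdv q (X p) := by
  refine derivation_ext fun k => ?_
  have h1 : ¬ ((q : ℕ) = r) := by omega
  have h2 : ¬ ((p : ℕ) = q) := by omega
  have h3 : ¬ ((p : ℕ) = r) := by omega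
  rw [Derivation.commutator_apply]
  rcases eq_or_ne k q with rfl | hkq
  · simp [pdv_X, h1, h2]
  · rcases eq_or_ne k r with rfl | hkr
    · simp [pdv_X, hkq, h2, h3]
    · simp [pdv_X, hkq, hkr]

theorem ev_mem {p q : ℕ} (hpq : p < q) :
    (pdv q (X p) : Derivation K (MvPolynomial ℕ K) (MvPolynomial ℕ K)) ∈ triSetInf K :=
  pdv_mem ((X_mem_supported (R := K)).2 hpq)

end AuxMain
set_option maxHeartbeats 1600000 in
/-- **Statement 19.** (1) The Lie algebra `u_∞` is not solvable. (2) Its centre is zero.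
(3) For `u ∈ u_∞`, the inner derivation `ad u` is a nilpotent endomorphism iff `u = 0`;
nevertheless every inner derivation of `u_∞` is locally nilpotent. -/
theorem triangularInf_properties
    (K : Type*) [Field K] [CharZero K] :
    (¬ LieAlgebra.IsSolvable ↥(triangularInf K)) ∧
    (LieAlgebra.center K ↥(triangularInf K) = ⊥) ∧
    (∀ u : ↥(triangularInf K),
      (∃ m : ℕ, (LieAlgebra.ad K ↥(triangularInf K) u) ^ m = 0) ↔ u = 0) ∧
    (∀ u v : ↥(triangularInf K), ∃ m : ℕ,
      ((LieAlgebra.ad K ↥(triangularInf K) u) ^ m) v = 0) := by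
  classical
  refine ⟨?_, ?_, ?_, ?_⟩
  · -- (1) not solvable
    intro hsolv
    obtain ⟨k, hk⟩ := (LieAlgebra.isSolvable_iff K _).mp hsolv
    have claim : ∀ nk p q (h : p + 2 ^ nk ≤ q),
        (⟨pdv q (X p), ev_mem (by have h2 := pow_pos (show 0 < 2 by omega) nk; omega)⟩ :
            ↥(triangularInf K)) ∈
          LieAlgebra.derivedSeries K ↥(triangularInf K) nk := by
      intro nk
      induction nk with
      | zero => intro p q h; exact LieSubmodule.mem_top _
      | succ nk ihnk =>
        intro p q h
        have h2 : 0 < 2 ^ nk := pow_pos (show 0 < 2 by omega) nk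
        have h3 : 2 ^ (nk + 1) = 2 ^ nk + 2 ^ nk := by rw [pow_succ]; omega
        have hpr : p < p + 2 ^ nk := by omega
        have hrq : p + 2 ^ nk < q := by omega
        have heq : (⟨pdv q (X p), ev_mem (by omega)⟩ : ↥(triangularInf K)) =
            ⁅(⟨pdv (p + 2 ^ nk) (X p), ev_mem hpr⟩ : ↥(triangularInf K)),
              (⟨pdv q (X (p + 2 ^ nk)), ev_mem hrq⟩ : ↥(triangularInf K))⁆ :=
          Subtype.ext (ev_bracket hpr hrq).symm
        rw [heq]
        rw [LieAlgebra.derivedSeries_def, LieAlgebra.derivedSeriesOfIdeal_succ]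
        exact LieSubmodule.lie_mem_lie
          (by rw [← LieAlgebra.derivedSeries_def]; exact ihnk p (p + 2 ^ nk) (le_refl _))
          (by rw [← LieAlgebra.derivedSeries_def]; exact ihnk (p + 2 ^ nk) q (by omega))
    have h0 := claim k 0 (2 ^ k) (by omega)
    rw [hk, LieSubmodule.mem_bot] at h0
    have hval : pdv (2 ^ k) (X 0) =
        (0 : Derivation K (MvPolynomial ℕ K) (MvPolynomial ℕ K)) :=
      congrArg Subtype.val h0
    have happ := Derivation.congr_fun hval (X (2 ^ k))
    rw [pdv_X, if_pos rfl, Derivation.zero_apply] at happ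
    exact MvPolynomial.X_ne_zero 0 happ
  · -- (2) centre is zero
    rw [eq_bot_iff]
    intro u hu
    rw [LieSubmodule.mem_bot]
    rw [LieModule.mem_maxTrivSubmodule] at hu
    have hval : ∀ i, (u : Derivation K (MvPolynomial ℕ K) (MvPolynomial ℕ K)) (X i) = 0 := by
      intro i
      obtain ⟨N0, hN0⟩ := tri_bound (mem_tri u)
      set N := N0 + i + 1 with hNdef
      have hiN : i < N := by omega
      have hN : (u : Derivation K (MvPolynomial ℕ K) (MvPolynomial ℕ K)) (X N) = 0 :=
        hN0 N (by omega)
      have h := hu ⟨pdv N (X i), ev_mem hiN⟩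
      have h2 : ⁅pdv N (X i), (u : Derivation K (MvPolynomial ℕ K) (MvPolynomial ℕ K))⁆ = 0 :=
        congrArg Subtype.val h
      have h3 := Derivation.congr_fun h2 (X N)
      rw [Derivation.commutator_apply, hN, map_zero, pdv_X, if_pos rfl,
        Derivation.zero_apply, zero_sub, neg_eq_zero] at h3
      exact h3
    exact Subtype.ext (derivation_ext fun i => by
      rw [hval i]; exact (Derivation.zero_apply _).symm)
  · -- (3) ad u nilpotent iff u = 0
    intro u
    constructor
    · rintro ⟨m, hm⟩
      by_contra hu0
      have hune : ∃ i, (u : Derivation K (MvPolynomial ℕ K) (MvPolynomial ℕ K)) (X i) ≠ 0 := by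
        by_contra hno
        push_neg at hno
        exact hu0 (Subtype.ext (derivation_ext fun i => by
          rw [hno i]; exact (Derivation.zero_apply _).symm))
      obtain ⟨i, hi⟩ := hune
      obtain ⟨N0, hN0⟩ := tri_bound (mem_tri u)
      set N := N0 + i + 1 with hNdef
      have hiN : i < N := by omega
      have hN : ∀ k, N < k →
          (u : Derivation K (MvPolynomial ℕ K) (MvPolynomial ℕ K)) (X k) = 0 :=
        fun k hk => hN0 k (by omega)
      have hstep : ∀ (t0 : ℕ) (x : MvPolynomial ℕ K), x ∈ supported K {j | j < N} →
          (⇑(u : Derivation K (MvPolynomial ℕ K) (MvPolynomial ℕ K)))^[t0]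
            ((u : Derivation K (MvPolynomial ℕ K) (MvPolynomial ℕ K)) x) = 0 →
          (u : Derivation K (MvPolynomial ℕ K) (MvPolynomial ℕ K)) x ≠ 0 →
          ∃ cc ∈ supported K {j | j < N},
            (u : Derivation K (MvPolynomial ℕ K) (MvPolynomial ℕ K)) cc ≠ 0 ∧
            (u : Derivation K (MvPolynomial ℕ K) (MvPolynomial ℕ K))
              ((u : Derivation K (MvPolynomial ℕ K) (MvPolynomial ℕ K)) cc) = 0 := by
        intro t0
        induction t0 with
        | zero => intro x hx h0 hne; exact absurd (by simpa using h0) hne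
        | succ t0 iht =>
          intro x hx h0 hne
          by_cases hcase : (u : Derivation K (MvPolynomial ℕ K) (MvPolynomial ℕ K))
              ((u : Derivation K (MvPolynomial ℕ K) (MvPolynomial ℕ K)) x) = 0
          · exact ⟨x, hx, hne, hcase⟩
          · refine iht ((u : Derivation K (MvPolynomial ℕ K) (MvPolynomial ℕ K)) x) ?_ ?_ hcase
            · exact Derivation.mem_supported_of_forall_mem' _ _ (triSetInf_stable (mem_tri u) N) hx
            · rwa [Function.iterate_succ_apply] at h0
      have hXi0 : (X i : MvPolynomial ℕ K) ∈ supported K {j | j < N} :=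
        (X_mem_supported (R := K)).2 hiN
      obtain ⟨t0, ht0⟩ := locnil_poly (mem_tri u)
        ((u : Derivation K (MvPolynomial ℕ K) (MvPolynomial ℕ K)) (X i))
      obtain ⟨c, hc, hdne, hd2⟩ := hstep t0 (X i) hXi0 ht0 hi
      have hcm : c ^ m ∈ supported K {j | j < N} := pow_mem hc m
      have hvmem : pdv N (c ^ m) ∈ triSetInf K := pdv_mem hcm
      have hcoe := ad_pow_coe u m ⟨pdv N (c ^ m), hvmem⟩
      rw [hm, LinearMap.zero_apply] at hcoe
      have hval0 : ((⟨pdv N (c ^ m), hvmem⟩ : ↥(triangularInf K)) :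
          Derivation K (MvPolynomial ℕ K) (MvPolynomial ℕ K)) = pdv N (c ^ m) := rfl
      rw [hval0, br_iter (mem_tri u) hN (c ^ m) m,
        iter_pow_factorial rfl hd2 m] at hcoe
      have happ := Derivation.congr_fun hcoe.symm (X N)
      rw [pdv_X, if_pos rfl, ZeroMemClass.coe_zero, Derivation.zero_apply] at happ
      have happ' : ((m.factorial : MvPolynomial ℕ K)) *
          ((u : Derivation K (MvPolynomial ℕ K) (MvPolynomial ℕ K)) c) ^ m = 0 := by
        rwa [nsmul_eq_mul] at happ
      exact absurd happ' (mul_ne_zero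
        (by exact_mod_cast Nat.factorial_ne_zero m) (pow_ne_zero m hdne))
    · rintro rfl
      exact ⟨1, by rw [pow_one, map_zero]⟩
  · -- (4) local nilpotency
    intro u v
    obtain ⟨N1, hN1⟩ := tri_bound (mem_tri u)
    obtain ⟨N2, hN2⟩ := tri_bound (mem_tri v)
    obtain ⟨m, hm⟩ := locnil_ad (max N1 N2)
      (u : Derivation K (MvPolynomial ℕ K) (MvPolynomial ℕ K)) (mem_tri u)
      (fun k hk => hN1 k (le_trans (le_max_left _ _) hk))
      (v : Derivation K (MvPolynomial ℕ K) (MvPolynomial ℕ K)) (mem_tri v)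
      (fun k hk => hN2 k (le_trans (le_max_right _ _) hk))
    refine ⟨m, Subtype.ext ?_⟩
    rw [ad_pow_coe u m v, hm]
    exact (ZeroMemClass.coe_zero _).symm
end
end
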